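/- Let C = VᵀV be an n×n real positive semidefinite matrix, where V is a d×n real matrix with columns v_1,…,v_n, and let s be an integer with 1 ≤ s ≤ d. Suppose Λ is a d×d real symmetric positive definite matrix, ν ∈ ℝ, and μ ∈ ℝⁿ with μ_i ≥ 0 for all i, such that ν + μ_i ≥ v_iᵀ Λ v_i for every i ∈ {1,…,n}. Then for every subset S ⊆ {1,…,n} with |S| = s and C_{S,S} nonsingular, log det(C_{S,S}) ≤ −log det_s(Λ) + s·ν + ∑_{i=1}^n μ_i − s. (Weak duality: the Lagrangian dual value z^{LD} is an upper bound on the optimal value z* of the maximum entropy sampling problem max_{|S|=s} log det(C_{S,S}).) -/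

import Mathlib

open Matrix Finset

noncomputable section

section CB
variable {d : ℕ} {ι : Type*} [Fintype ι] [DecidableEq ι]

lemma row_expand (M : Matrix (Fin d) ι ℝ) (β : Fin d → ℝ) :
    (Mᵀ * Matrix.diagonal β * M).det
      = ∑ f : ι → Fin d, (∏ i, (β (f i) * M (f i) i)) * (M.submatrix f id).det := by
  have hrow : (fun i : ι => (Mᵀ * Matrix.diagonal β * M) i)
      = fun i => ∑ k : Fin d, (β k * M k i) • (M k) := by
    funext i j
    rw [Finset.sum_apply, Matrix.mul_apply]
    refine Finset.sum_congr rfl fun k _ => ?_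
    rw [Matrix.mul_diagonal, Matrix.transpose_apply, Pi.smul_apply, smul_eq_mul]
    ring
  calc (Mᵀ * Matrix.diagonal β * M).det
      = Matrix.detRowAlternating (fun i : ι => (Mᵀ * Matrix.diagonal β * M) i) := rfl
    _ = Matrix.detRowAlternating (fun i : ι => ∑ k : Fin d, (β k * M k i) • (M k)) := by
        rw [hrow]
    _ = ∑ f : ι → Fin d, Matrix.detRowAlternating (fun i => (β (f i) * M (f i) i) • M (f i)) := by
        exact (Matrix.detRowAlternating (R := ℝ) (n := ι)).toMultilinearMap.map_sum
          (g := fun i k => (β k * M k i) • (M k))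
    _ = ∑ f : ι → Fin d, (∏ i, (β (f i) * M (f i) i)) * (M.submatrix f id).det := by
        refine Finset.sum_congr rfl fun f _ => ?_
        have := (Matrix.detRowAlternating (R := ℝ) (n := ι)).toMultilinearMap.map_smul_univ
          (fun i => β (f i) * M (f i) i) (fun i => M (f i))
        rw [show ((Matrix.detRowAlternating (R := ℝ) (n := ι)) fun i => (β (f i) * M (f i) i) • M (f i)) = _ from this, smul_eq_mul]
        rfl

lemma sym_expand (M : Matrix (Fin d) ι ℝ) (β : Fin d → ℝ) :
    ((Nat.factorial (Fintype.card ι)) : ℝ) * (Mᵀ * Matrix.diagonal β * M).det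
      = ∑ f : ι → Fin d, (∏ i, β (f i)) * (M.submatrix f id).det ^ 2 := by
  set c : (ι → Fin d) → ℝ :=
    fun f => (∏ i, (β (f i) * M (f i) i)) * (M.submatrix f id).det with hc
  have h1 : ∀ σ : Equiv.Perm ι, ∑ f : ι → Fin d, c (f ∘ σ) = (Mᵀ * Matrix.diagonal β * M).det := by
    intro σ
    rw [row_expand]
    let e : (ι → Fin d) ≃ (ι → Fin d) :=
      { toFun := fun f => f ∘ σ
        invFun := fun f => f ∘ σ.symm
        left_inv := fun f => by funext i; simp
        right_inv := fun f => by funext i; simp }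
    exact Fintype.sum_equiv e _ _ (fun f => rfl)
  have h2 : ∀ f : ι → Fin d, ∑ σ : Equiv.Perm ι, c (f ∘ σ)
      = (∏ i, β (f i)) * (M.submatrix f id).det ^ 2 := by
    intro f
    have hterm : ∀ σ : Equiv.Perm ι, c (f ∘ σ)
        = (∏ i, β (f i)) * (M.submatrix f id).det *
          ((Equiv.Perm.sign σ : ℤ) * ∏ i, (M.submatrix f id) (σ i) i) := by
      intro σ
      have hdet : (M.submatrix (f ∘ σ) id).det
          = (Equiv.Perm.sign σ : ℤ) * (M.submatrix f id).det := by
        rw [show M.submatrix (f ∘ σ) id = (M.submatrix f id).submatrix σ id by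
          rw [Matrix.submatrix_submatrix]; rfl]
        exact_mod_cast Matrix.det_permute σ _
      have hprod : (∏ i, (β ((f ∘ σ) i) * M ((f ∘ σ) i) i))
          = (∏ i, β (f i)) * ∏ i, M (f (σ i)) i := by
        rw [Finset.prod_mul_distrib]
        simp only [Function.comp_apply]
        rw [Equiv.prod_comp σ (fun i => β (f i))]
      rw [hc]
      simp only []
      rw [hprod, hdet]
      have : ∀ i, (M.submatrix f id) (σ i) i = M (f (σ i)) i := fun i => rfl
      simp only [this]
      ring
    rw [Finset.sum_congr rfl (fun σ _ => hterm σ), ← Finset.mul_sum,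
      ← Matrix.det_apply' (M.submatrix f id)]
    ring
  calc ((Nat.factorial (Fintype.card ι)) : ℝ) * (Mᵀ * Matrix.diagonal β * M).det
      = ∑ _σ : Equiv.Perm ι, (Mᵀ * Matrix.diagonal β * M).det := by
        rw [Finset.sum_const, nsmul_eq_mul, Finset.card_univ, Fintype.card_perm]
    _ = ∑ σ : Equiv.Perm ι, ∑ f : ι → Fin d, c (f ∘ σ) := by
        exact Finset.sum_congr rfl fun σ _ => (h1 σ).symm
    _ = ∑ f : ι → Fin d, ∑ σ : Equiv.Perm ι, c (f ∘ σ) := Finset.sum_comm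
    _ = ∑ f : ι → Fin d, (∏ i, β (f i)) * (M.submatrix f id).det ^ 2 :=
        Finset.sum_congr rfl fun f _ => h2 f

lemma strictMono_fin_le {s : ℕ} (e : Fin s → Fin d) (he : StrictMono e) :
    ∀ j : Fin s, (j : ℕ) ≤ (e j : ℕ) := by
  intro j
  induction' hn : (j : ℕ) with m ih generalizing j
  · exact Nat.zero_le _
  · have hm : m < s := by omega
    have hv : ((⟨m, hm⟩ : Fin s) : ℕ) = m := rfl
    have hlt : (⟨m, hm⟩ : Fin s) < j := by rw [Fin.lt_def, hv]; omega
    have h1 := ih ⟨m, hm⟩ hv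
    have h2 := he hlt
    rw [Fin.lt_def] at h2
    omega

lemma strictMono_fin_ub {s : ℕ} (hsd : s ≤ d) (e : Fin s → Fin d) (he : StrictMono e) :
    ∀ j : Fin s, (e j : ℕ) ≤ d - s + (j : ℕ) := by
  intro j
  have hs0 : 0 < s := j.pos
  have hd0 : 0 < d := lt_of_lt_of_le hs0 hsd
  let e' : Fin s → Fin d := fun i => (e i.rev).rev
  have he' : StrictMono e' := by
    intro a b hab
    have : b.rev < a.rev := Fin.rev_lt_rev.mpr hab
    have := he this
    exact Fin.rev_lt_rev.mpr this
  have h := strictMono_fin_le e' he' j.rev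
  have h1 : (j.rev : ℕ) = s - 1 - (j : ℕ) := by rw [Fin.val_rev]; omega
  have h2 : (e' j.rev : ℕ) = d - 1 - (e (j.rev.rev) : ℕ) := by
    simp only [e', Fin.val_rev]; omega
  rw [Fin.rev_rev] at h2
  rw [h1, h2] at h
  have := (e j).isLt
  have := j.isLt
  omega

lemma tail_prod_le {s : ℕ} (hsd : s ≤ d) (β : Fin d → ℝ)
    (hpos : ∀ i, 0 < β i) (hsort : Antitone β)
    {T : Finset (Fin d)} (hT : T.card = s) :
    (∏ i ∈ Finset.univ.filter (fun i : Fin d => d - s ≤ (i : ℕ)), β i) ≤ ∏ i ∈ T, β i := by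
  have htail : (∏ i ∈ Finset.univ.filter (fun i : Fin d => d - s ≤ (i : ℕ)), β i)
      = ∏ j : Fin s, β ⟨d - s + (j : ℕ), by omega⟩ := by
    refine (Finset.prod_nbij (fun j => ⟨d - s + (j : ℕ), by omega⟩) ?_ ?_ ?_ ?_).symm
    · intro j _
      simp only [Finset.mem_filter, Finset.mem_univ, true_and]
      omega
    · intro a _ b _ hab
      have : d - s + (a : ℕ) = d - s + (b : ℕ) := congrArg Fin.val hab
      exact Fin.ext (by omega)
    · intro i hi
      simp only [Finset.coe_filter, Set.mem_setOf_eq, Finset.mem_univ, true_and] at hi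
      refine ⟨⟨(i : ℕ) - (d - s), by omega⟩, by simp, Fin.ext ?_⟩
      simp only []
      omega
    · intro j _; rfl
  let e := T.orderEmbOfFin hT
  have hTe : (∏ i ∈ T, β i) = ∏ j : Fin s, β (e j) := by
    refine (Finset.prod_nbij (fun j => e j) ?_ ?_ ?_ ?_).symm
    · intro j _; exact T.orderEmbOfFin_mem hT j
    · intro a _ b _ hab; exact e.injective hab
    · intro i hi
      have : i ∈ Set.range (T.orderEmbOfFin hT) := by
        rw [T.range_orderEmbOfFin hT]; exact hi
      obtain ⟨j, hj⟩ := this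
      exact ⟨j, by simp, hj⟩
    · intro j _; rfl
  rw [htail, hTe]
  refine Finset.prod_le_prod (fun j _ => le_of_lt (hpos _)) (fun j _ => ?_)
  refine hsort ?_
  rw [Fin.le_def]
  exact strictMono_fin_ub hsd e e.strictMono j

lemma det_ge {s : ℕ} (hsd : s ≤ d) (M : Matrix (Fin d) ι ℝ) (β : Fin d → ℝ)
    (hpos : ∀ i, 0 < β i) (hsort : Antitone β) (hcard : Fintype.card ι = s) :
    (∏ i ∈ Finset.univ.filter (fun i : Fin d => d - s ≤ (i : ℕ)), β i) * (Mᵀ * M).det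
      ≤ (Mᵀ * Matrix.diagonal β * M).det := by
  set p := ∏ i ∈ Finset.univ.filter (fun i : Fin d => d - s ≤ (i : ℕ)), β i with hp
  have h1 := sym_expand M β
  have h0 := sym_expand M (fun _ => 1)
  rw [show Matrix.diagonal (fun _ : Fin d => (1 : ℝ)) = 1 from Matrix.diagonal_one,
    Matrix.mul_one] at h0
  simp only [Finset.prod_const_one, one_mul] at h0
  have hterm : ∀ f : ι → Fin d,
      p * (M.submatrix f id).det ^ 2 ≤ (∏ i, β (f i)) * (M.submatrix f id).det ^ 2 := by
    intro f
    by_cases hdf : (M.submatrix f id).det = 0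
    · rw [hdf]; simp
    · have hinj : Function.Injective f := by
        intro a b hab
        by_contra hne
        exact hdf (Matrix.det_zero_of_row_eq hne (funext fun k =>
          show M (f a) k = M (f b) k by rw [hab]))
      have himg : (∏ i, β (f i)) = ∏ t ∈ Finset.univ.image f, β t := by
        rw [Finset.prod_image (fun a _ b _ hab => hinj hab)]
      have hcardT : (Finset.univ.image f).card = s := by
        rw [Finset.card_image_of_injective _ hinj, Finset.card_univ, hcard]
      have hple : p ≤ ∏ i, β (f i) := by
        rw [himg, hp]
        exact tail_prod_le hsd β hpos hsort hcardT
      exact mul_le_mul_of_nonneg_right hple (sq_nonneg _)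
  have hfact : (0 : ℝ) < (Nat.factorial (Fintype.card ι) : ℝ) := by
    exact_mod_cast Nat.factorial_pos _
  rw [← mul_le_mul_iff_right₀ hfact]
  calc (Nat.factorial (Fintype.card ι) : ℝ) * (p * (Mᵀ * M).det)
      = p * ((Nat.factorial (Fintype.card ι) : ℝ) * (Mᵀ * M).det) := by ring
    _ = ∑ f : ι → Fin d, p * ((M.submatrix f id).det ^ 2) := by
        rw [h0, Finset.mul_sum]
    _ ≤ ∑ f : ι → Fin d, (∏ i, β (f i)) * (M.submatrix f id).det ^ 2 :=
        Finset.sum_le_sum fun f _ => hterm f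
    _ = (Nat.factorial (Fintype.card ι) : ℝ) * (Mᵀ * Matrix.diagonal β * M).det := h1.symm

lemma det_mul_self_nonneg (M : Matrix (Fin d) ι ℝ) : 0 ≤ (Mᵀ * M).det := by
  have h0 := sym_expand M (fun _ => 1)
  rw [show Matrix.diagonal (fun _ : Fin d => (1 : ℝ)) = 1 from Matrix.diagonal_one,
    Matrix.mul_one] at h0
  simp only [Finset.prod_const_one, one_mul] at h0
  have hfact : (0 : ℝ) < (Nat.factorial (Fintype.card ι) : ℝ) := by
    exact_mod_cast Nat.factorial_pos _
  have hnn : (0:ℝ) ≤ ∑ f : ι → Fin d, (M.submatrix f id).det ^ 2 :=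
    Finset.sum_nonneg fun f _ => sq_nonneg _
  nlinarith

end CB


/-- `lam` lists the eigenvalues (with multiplicity) of the real symmetric matrix `X`,
via an orthogonal spectral decomposition. -/
def IsSpectralDecomp {m : Type*} [Fintype m] [DecidableEq m]
    (X : Matrix m m ℝ) (lam : m → ℝ) : Prop :=
  ∃ Q : Matrix m m ℝ, Q * Qᵀ = 1 ∧ X = Q * Matrix.diagonal lam * Qᵀ

/-- Principal submatrix `C_{S,S}`. -/
def subSub {n : ℕ} (C : Matrix (Fin n) (Fin n) ℝ) (S : Finset (Fin n)) :
    Matrix {i // i ∈ S} {i // i ∈ S} ℝ :=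
  Matrix.of fun a b => C a.1 b.1

/-- The value `λ_{i+1}` (1-based), i.e. the coordinate of `lam` of 0-based index `i`;
`0` when out of range. -/
def extVal {d : ℕ} (lam : Fin d → ℝ) : ℕ → ℝ :=
  fun i => if h : i < d then lam ⟨i, h⟩ else 0

/-- `∑_{i=k+1}^d λ_i` (1-based), i.e. the sum of the coordinates of 0-based index `≥ k`. -/
def tailSum {d : ℕ} (lam : Fin d → ℝ) (k : ℕ) : ℝ :=
  ∑ i ∈ Finset.univ.filter (fun i : Fin d => k ≤ (i : ℕ)), lam i

/-- `k = k(λ, s)`: an integer `0 ≤ k < s` with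
`λ_k > (1/(s-k)) ∑_{i=k+1}^d λ_i ≥ λ_{k+1}`, with the convention `λ₀ = +∞`. -/
def IsKIndex {d : ℕ} (lam : Fin d → ℝ) (s k : ℕ) : Prop :=
  k < s ∧ extVal lam k ≤ tailSum lam k / ((s : ℝ) - k) ∧
    (k = 0 ∨ tailSum lam k / ((s : ℝ) - k) < extVal lam (k - 1))

/-- `P` is the Moore–Penrose pseudoinverse of `X`. -/
def IsPseudoInv {d : ℕ} (X P : Matrix (Fin d) (Fin d) ℝ) : Prop :=
  X * P * X = X ∧ P * X * P = P ∧ (X * P)ᵀ = X * P ∧ (P * X)ᵀ = P * X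

/-- Weak duality for MESP: any feasible solution `(Λ, ν, μ)` of the
Lagrangian dual gives an upper bound on `log det(C_{S,S})` for every size-`s` subset `S`
with `C_{S,S}` nonsingular. -/
theorem stmt_3 (d n s : ℕ) (hs1 : 1 ≤ s) (hsd : s ≤ d)
    (V : Matrix (Fin d) (Fin n) ℝ)
    (Lam : Matrix (Fin d) (Fin d) ℝ) (beta : Fin d → ℝ)
    (hsort : Antitone beta) (hpos : ∀ i, 0 < beta i)
    (hdecomp : IsSpectralDecomp Lam beta)
    (ν : ℝ) (μ : Fin n → ℝ) (hμ : ∀ i, 0 ≤ μ i)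
    (hfeas : ∀ i : Fin n, (fun a => V a i) ⬝ᵥ (Lam *ᵥ fun a => V a i) ≤ ν + μ i)
    (S : Finset (Fin n)) (hS : S.card = s) (hnonsing : (subSub (Vᵀ * V) S).det ≠ 0) :
    Real.log (subSub (Vᵀ * V) S).det ≤
      - Real.log (∏ i ∈ Finset.univ.filter (fun i : Fin d => d - s ≤ (i : ℕ)), beta i)
        + s * ν + ∑ i, μ i - s := by
  classical
  obtain ⟨Q, hQ, hLam⟩ := hdecomp
  let W : Matrix (Fin d) {i // i ∈ S} ℝ := Matrix.of fun a i => V a i.1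
  let M : Matrix (Fin d) {i // i ∈ S} ℝ := Qᵀ * W
  have hcard : Fintype.card {i // i ∈ S} = s := by rw [Fintype.card_coe, hS]
  have hG : subSub (Vᵀ * V) S = Wᵀ * W := by
    ext a b
    simp [subSub, Matrix.mul_apply, W]
  have hMM : Mᵀ * M = Wᵀ * W := by
    show (Qᵀ * W)ᵀ * (Qᵀ * W) = Wᵀ * W
    rw [Matrix.transpose_mul, Matrix.transpose_transpose, Matrix.mul_assoc,
      ← Matrix.mul_assoc Q Qᵀ W, hQ, Matrix.one_mul]
  have hHW : Mᵀ * Matrix.diagonal beta * M = Wᵀ * Lam * W := by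
    show (Qᵀ * W)ᵀ * Matrix.diagonal beta * (Qᵀ * W) = Wᵀ * Lam * W
    rw [hLam, Matrix.transpose_mul, Matrix.transpose_transpose]
    simp only [Matrix.mul_assoc]
  set G := Wᵀ * W with hGdef
  set H := Mᵀ * Matrix.diagonal beta * M with hHdef
  set p := ∏ i ∈ Finset.univ.filter (fun i : Fin d => d - s ≤ (i : ℕ)), beta i with hpdef
  have hp : 0 < p := Finset.prod_pos fun i _ => hpos i
  have hge : p * G.det ≤ H.det := by
    have := det_ge hsd M beta hpos hsort hcard
    rwa [hMM] at this
  have hGdet_pos : 0 < G.det := by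
    rw [hG] at hnonsing
    have h0 := det_mul_self_nonneg W
    exact lt_of_le_of_ne h0 (Ne.symm hnonsing)
  have hHdet_pos : 0 < H.det := lt_of_lt_of_le (by positivity) hge
  have hDpsd : (Matrix.diagonal beta).PosSemidef :=
    Matrix.posSemidef_diagonal_iff.mpr fun i => le_of_lt (hpos i)
  have hHpsd : H.PosSemidef := by
    have := hDpsd.conjTranspose_mul_mul_same M
    rwa [Matrix.conjTranspose_eq_transpose_of_trivial] at this
  have hH : H.IsHermitian := hHpsd.isHermitian
  set ev := hH.eigenvalues with hev
  have hdetH : H.det = ∏ i, ev i := by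
    have := hH.det_eq_prod_eigenvalues
    simpa using this
  have hevnn : ∀ i, 0 ≤ ev i := hHpsd.eigenvalues_nonneg
  have hevpos : ∀ i, 0 < ev i := by
    intro i
    rcases lt_or_eq_of_le (hevnn i) with h | h
    · exact h
    · exfalso
      have : H.det = 0 := by
        rw [hdetH]
        exact Finset.prod_eq_zero (Finset.mem_univ i) h.symm
      exact absurd this (ne_of_gt hHdet_pos)
  have htr : H.trace = ∑ i, ev i := by
    calc H.trace
        = ((hH.eigenvectorUnitary : Matrix {i // i ∈ S} {i // i ∈ S} ℝ) *
            Matrix.diagonal (RCLike.ofReal ∘ ev) *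
            (star (hH.eigenvectorUnitary : Matrix {i // i ∈ S} {i // i ∈ S} ℝ))).trace := by
          conv_lhs => rw [hH.spectral_theorem, Unitary.conjStarAlgAut_apply]
      _ = ((star (hH.eigenvectorUnitary : Matrix {i // i ∈ S} {i // i ∈ S} ℝ)) *
            (hH.eigenvectorUnitary : Matrix {i // i ∈ S} {i // i ∈ S} ℝ) *
            Matrix.diagonal (RCLike.ofReal ∘ ev)).trace := Matrix.trace_mul_cycle _ _ _
      _ = (Matrix.diagonal (RCLike.ofReal ∘ ev)).trace := by
          rw [Unitary.coe_star_mul_self, Matrix.one_mul]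
      _ = ∑ i, ev i := by
          rw [Matrix.trace_diagonal]
          simp
  have htrace : H.trace ≤ s * ν + ∑ i, μ i := by
    have hHa : ∀ a : {i // i ∈ S}, H a a ≤ ν + μ a.1 := by
      intro a
      have heq : H a a = (fun r => V r a.1) ⬝ᵥ (Lam *ᵥ fun r => V r a.1) := by
        rw [hHW]
        simp only [Matrix.mul_apply, Matrix.transpose_apply, Matrix.of_apply, W,
          dotProduct, Matrix.mulVec, Finset.sum_mul, Finset.mul_sum]
        rw [Finset.sum_comm]
        refine Finset.sum_congr rfl fun k _ => Finset.sum_congr rfl fun j _ => by ring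
      rw [heq]
      exact hfeas a.1
    have h1 : H.trace = ∑ a : {i // i ∈ S}, H a a := by
      simp [Matrix.trace, Matrix.diag]
    rw [h1]
    calc ∑ a : {i // i ∈ S}, H a a ≤ ∑ a : {i // i ∈ S}, (ν + μ a.1) :=
          Finset.sum_le_sum fun a _ => hHa a
      _ = s * ν + ∑ i ∈ S, μ i := by
          rw [Finset.sum_add_distrib, Finset.sum_const, Finset.card_univ, hcard,
            nsmul_eq_mul, Finset.sum_coe_sort S μ]
      _ ≤ s * ν + ∑ i, μ i := by
          have : ∑ i ∈ S, μ i ≤ ∑ i, μ i :=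
            Finset.sum_le_sum_of_subset_of_nonneg (Finset.subset_univ S)
              (fun i _ _ => hμ i)
          linarith
  have hlogH : Real.log H.det ≤ H.trace - s := by
    rw [hdetH, Real.log_prod fun i _ => ne_of_gt (hevpos i), htr]
    have h2 : ∑ i, Real.log (ev i) ≤ ∑ i : {i // i ∈ S}, (ev i - 1) :=
      Finset.sum_le_sum fun i _ => Real.log_le_sub_one_of_pos (hevpos i)
    have h3 : ∑ i : {i // i ∈ S}, (ev i - 1) = (∑ i, ev i) - s := by
      rw [Finset.sum_sub_distrib, Finset.sum_const, Finset.card_univ, hcard, nsmul_eq_mul,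
        mul_one]
    linarith
  rw [hG]
  have h4 : G.det ≤ H.det / p := by
    rw [le_div_iff₀ hp]
    linarith
  have h5 := Real.log_le_log hGdet_pos h4
  rw [Real.log_div (ne_of_gt hHdet_pos) (ne_of_gt hp)] at h5
  linarith
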